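/- Let A : S^n → R^m be a linear map with adjoint A*, b ∈ R^m, Z ∈ S^n, and F_P = {X ∈ S^n : A(X) = b, X ⪰ 0}. Suppose ξ ∈ R^m satisfies A( Π_{S^n_+}(A*ξ + Z) ) = b. Then X := Π_{S^n_+}(A*ξ + Z) is the unique minimizer of ‖X' − Z‖ over X' ∈ F_P, i.e., X is the projection of Z onto F_P in the Frobenius norm. -/

import Mathlib

set_option autoImplicit false

open Matrix Finset Filter
open scoped RealInnerProductSpace

noncomputable section

/-- The trace inner product `⟨X, Y⟩ = trace (Xᵀ * Y)` on real `n × n` matrices. -/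
def mInner {n : ℕ} (X Y : Matrix (Fin n) (Fin n) ℝ) : ℝ := (Xᵀ * Y).trace

/-- The Frobenius norm induced by the trace inner product. -/
def mNorm {n : ℕ} (X : Matrix (Fin n) (Fin n) ℝ) : ℝ := Real.sqrt (mInner X X)

/-- `ℝ^m` with the Euclidean inner product. -/
abbrev Vec (m : ℕ) := EuclideanSpace ℝ (Fin m)

/-- `P` is the (unique) nearest positive semidefinite matrix to `Z` in the Frobenius norm,
i.e. the projection of `Z` onto the PSD cone. -/
def IsProjPSD {n : ℕ} (Z P : Matrix (Fin n) (Fin n) ℝ) : Prop :=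
  P.PosSemidef ∧
    ∀ Y : Matrix (Fin n) (Fin n) ℝ, Y.PosSemidef → mNorm (P - Z) ≤ mNorm (Y - Z)


/-! ### Auxiliary lemmas about the trace inner product -/

lemma mInner_eq_sum {n : ℕ} (X Y : Matrix (Fin n) (Fin n) ℝ) :
    mInner X Y = ∑ i, ∑ j, X i j * Y i j := by
  simp only [mInner, Matrix.trace, Matrix.diag, Matrix.mul_apply, Matrix.transpose_apply]
  exact Finset.sum_comm

lemma mInner_comm {n : ℕ} (X Y : Matrix (Fin n) (Fin n) ℝ) : mInner X Y = mInner Y X := by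
  simp [mInner_eq_sum, mul_comm]

lemma mInner_add_left {n : ℕ} (X Y Z : Matrix (Fin n) (Fin n) ℝ) :
    mInner (X + Y) Z = mInner X Z + mInner Y Z := by
  simp [mInner_eq_sum, add_mul, Finset.sum_add_distrib]

lemma mInner_add_right {n : ℕ} (X Y Z : Matrix (Fin n) (Fin n) ℝ) :
    mInner X (Y + Z) = mInner X Y + mInner X Z := by
  rw [mInner_comm, mInner_add_left, mInner_comm Y X, mInner_comm Z X]

lemma mInner_sub_left {n : ℕ} (X Y Z : Matrix (Fin n) (Fin n) ℝ) :
    mInner (X - Y) Z = mInner X Z - mInner Y Z := by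
  simp [mInner_eq_sum, sub_mul, Finset.sum_sub_distrib]

lemma mInner_smul_left {n : ℕ} (t : ℝ) (X Y : Matrix (Fin n) (Fin n) ℝ) :
    mInner (t • X) Y = t * mInner X Y := by
  simp [mInner_eq_sum, Finset.mul_sum, mul_assoc]

lemma mInner_smul_right {n : ℕ} (t : ℝ) (X Y : Matrix (Fin n) (Fin n) ℝ) :
    mInner X (t • Y) = t * mInner X Y := by
  simp [mInner_eq_sum, Finset.mul_sum, mul_left_comm]

lemma mInner_self_nonneg {n : ℕ} (X : Matrix (Fin n) (Fin n) ℝ) : 0 ≤ mInner X X := by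
  rw [mInner_eq_sum]
  exact Finset.sum_nonneg fun i _ => Finset.sum_nonneg fun j _ => mul_self_nonneg _

lemma mInner_self_eq_zero {n : ℕ} {X : Matrix (Fin n) (Fin n) ℝ}
    (h : mInner X X = 0) : X = 0 := by
  rw [mInner_eq_sum] at h
  ext i j
  have h1 := (Finset.sum_eq_zero_iff_of_nonneg
    (fun i _ => Finset.sum_nonneg fun j _ => mul_self_nonneg (X i j))).mp h i (Finset.mem_univ i)
  have h2 := (Finset.sum_eq_zero_iff_of_nonneg
    (fun j _ => mul_self_nonneg (X i j))).mp h1 j (Finset.mem_univ j)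
  simpa [mul_self_eq_zero] using h2

lemma mInner_self_pos {n : ℕ} {X : Matrix (Fin n) (Fin n) ℝ} (h : X ≠ 0) :
    0 < mInner X X :=
  (mInner_self_nonneg X).lt_of_ne fun h0 => h (mInner_self_eq_zero h0.symm)

lemma mInner_expand {n : ℕ} (P Q : Matrix (Fin n) (Fin n) ℝ) :
    mInner (P + Q) (P + Q) = mInner P P + 2 * mInner P Q + mInner Q Q := by
  rw [mInner_add_left, mInner_add_right, mInner_add_right, mInner_comm Q P]; ring

lemma sq_le_of_mNorm_le {n : ℕ} {X Y : Matrix (Fin n) (Fin n) ℝ}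
    (h : mNorm X ≤ mNorm Y) : mInner X X ≤ mInner Y Y := by
  have h1 : Real.sqrt (mInner X X) ≤ Real.sqrt (mInner Y Y) := h
  calc mInner X X = Real.sqrt (mInner X X) ^ 2 := (Real.sq_sqrt (mInner_self_nonneg X)).symm
    _ ≤ Real.sqrt (mInner Y Y) ^ 2 := pow_le_pow_left₀ (Real.sqrt_nonneg _) h1 2
    _ = mInner Y Y := Real.sq_sqrt (mInner_self_nonneg Y)

/-- The PSD cone is convex. -/
lemma psd_convex {n : ℕ} {t : ℝ} {X Y : Matrix (Fin n) (Fin n) ℝ} (hX : X.PosSemidef)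
    (hY : Y.PosSemidef) (ht0 : 0 ≤ t) (ht1 : t ≤ 1) : (X + t • (Y - X)).PosSemidef := by
  refine posSemidef_iff_dotProduct_mulVec.mpr ⟨?_, ?_⟩
  · show _ = _
    have hx : Xᵀ = X := hX.1
    have hy : Yᵀ = Y := hY.1
    simp [Matrix.IsHermitian, conjTranspose_add, conjTranspose_smul, conjTranspose_sub, hx, hy]
  · intro x
    have h1 := hX.dotProduct_mulVec_nonneg x
    have h2 := hY.dotProduct_mulVec_nonneg x
    simp only [Matrix.add_mulVec, Matrix.smul_mulVec, Matrix.sub_mulVec,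
      dotProduct_add, dotProduct_smul, dotProduct_sub, smul_eq_mul] at *
    nlinarith

/-- Variational inequality for the projection onto the PSD cone. -/
lemma proj_var_ineq {n : ℕ} {W X : Matrix (Fin n) (Fin n) ℝ} (hX : IsProjPSD W X)
    {Y : Matrix (Fin n) (Fin n) ℝ} (hY : Y.PosSemidef) :
    0 ≤ mInner (X - W) (Y - X) := by
  set c : ℝ := mInner (X - W) (Y - X) with hc
  set d : ℝ := mInner (Y - X) (Y - X) with hd
  have hd0 : 0 ≤ d := mInner_self_nonneg _
  have key : ∀ t : ℝ, 0 < t → t ≤ 1 → 0 ≤ 2 * t * c + t ^ 2 * d := by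
    intro t ht0 ht1
    have hpsd := psd_convex hX.1 hY ht0.le ht1
    have hle := sq_le_of_mNorm_le (hX.2 _ hpsd)
    have hEq : X + t • (Y - X) - W = (X - W) + t • (Y - X) := by abel
    rw [hEq, mInner_expand, mInner_smul_right] at hle
    have hsm : mInner (t • (Y - X)) (t • (Y - X)) = t ^ 2 * d := by
      simp only [mInner_smul_left, mInner_smul_right]; ring
    rw [hsm] at hle
    linarith
  by_contra hcon
  push_neg at hcon
  set t : ℝ := min 1 (-c / (d + 1)) with htdef
  have htpos : 0 < t := lt_min one_pos (div_pos (by linarith) (by linarith))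
  have ht1 : t ≤ 1 := min_le_left _ _
  have ht2 : t ≤ -c / (d + 1) := min_le_right _ _
  have ht3 : t * (d + 1) ≤ -c := (le_div_iff₀ (by linarith : (0:ℝ) < d + 1)).mp ht2
  have hk := key t htpos ht1
  nlinarith [mul_pos htpos htpos, mul_nonneg htpos.le hd0]

/-- if `A(Π_{S^n_+}(A*ξ + Z)) = b`, then `X = Π_{S^n_+}(A*ξ + Z)` is the
unique nearest point to `Z` in the spectrahedron `F_P = {X : A X = b, X ⪰ 0}`. -/
theorem projection_onto_spectrahedron {n m : ℕ}
    (A : Matrix (Fin n) (Fin n) ℝ →ₗ[ℝ] Vec m)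
    (Aadj : Vec m →ₗ[ℝ] Matrix (Fin n) (Fin n) ℝ)
    (hadj : ∀ (X : Matrix (Fin n) (Fin n) ℝ) (ξ : Vec m), ⟪A X, ξ⟫ = mInner X (Aadj ξ))
    (hAadjSymm : ∀ ξ : Vec m, (Aadj ξ).IsSymm)
    (b : Vec m) (Z : Matrix (Fin n) (Fin n) ℝ) (hZ : Z.IsSymm)
    (proj : Matrix (Fin n) (Fin n) ℝ → Matrix (Fin n) (Fin n) ℝ)
    (hproj : ∀ Y : Matrix (Fin n) (Fin n) ℝ, IsProjPSD Y (proj Y))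
    (ξ : Vec m) (hfeas : A (proj (Aadj ξ + Z)) = b) :
    (A (proj (Aadj ξ + Z)) = b ∧ (proj (Aadj ξ + Z)).PosSemidef) ∧
    ∀ X' : Matrix (Fin n) (Fin n) ℝ, A X' = b → X'.PosSemidef →
      mNorm (proj (Aadj ξ + Z) - Z) ≤ mNorm (X' - Z) ∧
      (X' ≠ proj (Aadj ξ + Z) → mNorm (proj (Aadj ξ + Z) - Z) < mNorm (X' - Z)) := by
  obtain ⟨hXpsd, hXmin⟩ := hproj (Aadj ξ + Z)
  set W : Matrix (Fin n) (Fin n) ℝ := Aadj ξ + Z with hW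
  set X : Matrix (Fin n) (Fin n) ℝ := proj W with hXdef
  refine ⟨⟨hfeas, hXpsd⟩, ?_⟩
  intro X' hA' hpsd'
  have hvar : 0 ≤ mInner (X - W) (X' - X) := proj_var_ineq ⟨hXpsd, hXmin⟩ hpsd'
  have horth : mInner (X' - X) (Aadj ξ) = 0 := by
    rw [mInner_sub_left, ← hadj X' ξ, ← hadj X ξ, hA', hfeas, sub_self]
  have hcross : 0 ≤ mInner (X' - X) (X - Z) := by
    have hEq : X - Z = (X - W) + Aadj ξ := by rw [hW]; abel
    rw [hEq, mInner_add_right, horth, add_zero, mInner_comm]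
    exact hvar
  have hsq : mInner (X - Z) (X - Z) + mInner (X' - X) (X' - X)
      ≤ mInner (X' - Z) (X' - Z) := by
    have hEq : X' - Z = (X' - X) + (X - Z) := by abel
    rw [hEq, mInner_expand]
    linarith
  constructor
  · exact Real.sqrt_le_sqrt (by linarith [mInner_self_nonneg (X' - X)])
  · intro hne
    have hne0 : X' - X ≠ 0 := sub_ne_zero.mpr hne
    have hpos := mInner_self_pos hne0
    exact Real.sqrt_lt_sqrt (mInner_self_nonneg _) (by linarith)
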